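/- The map F(x) = (sort(x), Q(x)) separates A_n-orbits: if F(x) = F(y) then there exists an even permutation σ ∈ A_n with y = σx. -/

import Mathlib

/-- The nondecreasing rearrangement (sorting) of a vector. -/
noncomputable def sortVec {n : ℕ} (x : Fin n → ℝ) : Fin n → ℝ := x ∘ Tuple.sort x

/-- Q(x) = (∏_{i<j} sign(x_j - x_i)) · min_{i<j} |x_j - x_i|. -/
noncomputable def Qfun {n : ℕ} (x : Fin n → ℝ) : ℝ :=
  (∏ i : Fin n, ∏ j ∈ Finset.Ioi i, Real.sign (x j - x i)) *
  sInf {d : ℝ | ∃ i j : Fin n, i < j ∧ d = |x j - x i|}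

/-- Minimal adjacent gap min_{j} (x_{j+1} - x_j). -/
noncomputable def minGap {n : ℕ} (x : Fin n → ℝ) : ℝ :=
  sInf {d : ℝ | ∃ i j : Fin n, (i : ℕ) + 1 = (j : ℕ) ∧ d = x j - x i}

/-- d_±(x,y) = min_{σ ∈ S_n} ‖x - σy‖₁ where (σy)_i = y_{σ(i)}. -/
noncomputable def dpm {n : ℕ} (x y : Fin n → ℝ) : ℝ :=
  Finset.univ.inf' Finset.univ_nonempty fun σ : Equiv.Perm (Fin n) => ∑ i, |x i - y (σ i)|

/-- d_+(x,y) = min_{σ ∈ A_n} ‖x - σy‖₁. -/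
noncomputable def dplus {n : ℕ} (x y : Fin n → ℝ) : ℝ :=
  Finset.univ.inf' Finset.univ_nonempty fun σ : alternatingGroup (Fin n) =>
    ∑ i, |x i - y ((σ : Equiv.Perm (Fin n)) i)|

lemma real_sign_mul (a b : ℝ) : Real.sign (a * b) = Real.sign a * Real.sign b := by
  rcases lt_trichotomy a 0 with ha | ha | ha
  · rcases lt_trichotomy b 0 with hb | hb | hb
    · rw [Real.sign_of_pos (mul_pos_of_neg_of_neg ha hb), Real.sign_of_neg ha,
        Real.sign_of_neg hb]; ring
    · subst hb; simp [Real.sign_zero]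
    · rw [Real.sign_of_neg (mul_neg_of_neg_of_pos ha hb), Real.sign_of_neg ha,
        Real.sign_of_pos hb]; ring
  · subst ha; simp [Real.sign_zero]
  · rcases lt_trichotomy b 0 with hb | hb | hb
    · rw [Real.sign_of_neg (mul_neg_of_pos_of_neg ha hb), Real.sign_of_pos ha,
        Real.sign_of_neg hb]; ring
    · subst hb; simp [Real.sign_zero]
    · rw [Real.sign_of_pos (mul_pos ha hb), Real.sign_of_pos ha, Real.sign_of_pos hb]; ring

lemma real_sign_prod {ι : Type*} (s : Finset ι) (f : ι → ℝ) :
    Real.sign (∏ i ∈ s, f i) = ∏ i ∈ s, Real.sign (f i) := by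
  classical
  induction s using Finset.induction with
  | empty => simp [Real.sign_one]
  | insert _ _ h ih => rw [Finset.prod_insert h, Finset.prod_insert h, real_sign_mul, ih]

lemma sign_det_vandermonde {n : ℕ} (x : Fin n → ℝ) :
    Real.sign (Matrix.det (Matrix.vandermonde x)) =
      ∏ i : Fin n, ∏ j ∈ Finset.Ioi i, Real.sign (x j - x i) := by
  rw [Matrix.det_vandermonde, real_sign_prod]
  exact Finset.prod_congr rfl fun i _ => real_sign_prod _ _

lemma prod_sign_perm {n : ℕ} (x : Fin n → ℝ) (π : Equiv.Perm (Fin n)) :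
    (∏ i : Fin n, ∏ j ∈ Finset.Ioi i, Real.sign ((x ∘ π) j - (x ∘ π) i)) =
    Real.sign (((Equiv.Perm.sign π : ℤ) : ℝ)) *
      ∏ i : Fin n, ∏ j ∈ Finset.Ioi i, Real.sign (x j - x i) := by
  have hV : Matrix.vandermonde (x ∘ π) = (Matrix.vandermonde x).submatrix π id := by
    ext i j; simp [Matrix.vandermonde, Matrix.submatrix]
  have h1 : Matrix.det (Matrix.vandermonde (x ∘ π)) =
      ((Equiv.Perm.sign π : ℤ) : ℝ) * Matrix.det (Matrix.vandermonde x) := by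
    rw [hV, Matrix.det_permute]
  calc (∏ i : Fin n, ∏ j ∈ Finset.Ioi i, Real.sign ((x ∘ π) j - (x ∘ π) i))
      = Real.sign (Matrix.det (Matrix.vandermonde (x ∘ π))) := (sign_det_vandermonde _).symm
    _ = Real.sign (((Equiv.Perm.sign π : ℤ) : ℝ)) *
          Real.sign (Matrix.det (Matrix.vandermonde x)) := by rw [h1, real_sign_mul]
    _ = _ := by rw [sign_det_vandermonde]

lemma S_eq_ne {n : ℕ} (z : Fin n → ℝ) :
    {d : ℝ | ∃ i j : Fin n, i < j ∧ d = |z j - z i|} =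
    {d : ℝ | ∃ i j : Fin n, i ≠ j ∧ d = |z j - z i|} := by
  ext d; constructor
  · rintro ⟨i, j, hij, rfl⟩; exact ⟨i, j, hij.ne, rfl⟩
  · rintro ⟨i, j, hij, rfl⟩
    rcases hij.lt_or_gt with h | h
    · exact ⟨i, j, h, rfl⟩
    · exact ⟨j, i, h, abs_sub_comm _ _⟩

lemma S_perm {n : ℕ} (x : Fin n → ℝ) (π : Equiv.Perm (Fin n)) :
    {d : ℝ | ∃ i j : Fin n, i < j ∧ d = |(x ∘ π) j - (x ∘ π) i|} =
    {d : ℝ | ∃ i j : Fin n, i < j ∧ d = |x j - x i|} := by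
  rw [S_eq_ne, S_eq_ne]
  ext d; constructor
  · rintro ⟨i, j, hij, rfl⟩
    exact ⟨π i, π j, fun h => hij (π.injective h), rfl⟩
  · rintro ⟨i, j, hij, rfl⟩
    refine ⟨π⁻¹ i, π⁻¹ j, fun h => hij (π⁻¹.injective h), ?_⟩
    simp

theorem stmt14 (n : ℕ) (hn : 2 ≤ n) (x y : Fin n → ℝ)
    (h : sortVec x = sortVec y ∧ Qfun x = Qfun y) :
    ∃ σ ∈ alternatingGroup (Fin n), y = x ∘ σ := by
  obtain ⟨hsort, hQ⟩ := h
  set σx := Tuple.sort x with hσx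
  set σy := Tuple.sort y with hσy
  set π : Equiv.Perm (Fin n) := σx * σy⁻¹ with hπdef
  have hy : y = x ∘ ⇑π := by
    funext i
    have h1 := congrFun hsort (σy⁻¹ i)
    simp only [sortVec, Function.comp_apply] at h1
    simp only [hπdef, Function.comp_apply, Equiv.Perm.mul_apply]
    rw [← hσx, ← hσy] at h1
    rw [h1]
    simp
  by_cases hinj : Function.Injective x
  · -- x injective: use Q to show π is even
    rcases Int.units_eq_one_or (Equiv.Perm.sign π) with hs | hs
    · exact ⟨π, Equiv.Perm.mem_alternatingGroup.mpr hs, hy⟩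
    · exfalso
      set P : (Fin n → ℝ) → ℝ :=
        fun z => ∏ i : Fin n, ∏ j ∈ Finset.Ioi i, Real.sign (z j - z i) with hP
      have hPx : P x ≠ 0 := by
        rw [hP]
        rw [Finset.prod_ne_zero_iff]
        intro i _
        rw [Finset.prod_ne_zero_iff]
        intro j hj
        intro hzero
        exact (sub_ne_zero.mpr (hinj.ne (Finset.mem_Ioi.mp hj).ne'))
          (Real.sign_eq_zero_iff.mp hzero)
      -- common positive min gap
      set S : Set ℝ := {d : ℝ | ∃ i j : Fin n, i < j ∧ d = |x j - x i|} with hS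
      have hSy : {d : ℝ | ∃ i j : Fin n, i < j ∧ d = |y j - y i|} = S := by
        rw [hy]; exact S_perm x π
      have hSfin : S.Finite := by
        apply Set.Finite.subset
          (Set.finite_range (fun p : Fin n × Fin n => |x p.2 - x p.1|))
        rintro d ⟨i, j, _, rfl⟩
        exact ⟨(i, j), rfl⟩
      have hSne : S.Nonempty := by
        refine ⟨|x ⟨1, by omega⟩ - x ⟨0, by omega⟩|, ⟨0, by omega⟩, ⟨1, by omega⟩, ?_, rfl⟩
        exact Fin.mk_lt_mk.mpr one_pos
      have hmpos : 0 < sInf S := by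
        obtain ⟨i, j, hij, hd⟩ := hSne.csInf_mem hSfin
        rw [hd]
        exact abs_pos.mpr (sub_ne_zero.mpr (hinj.ne hij.ne'))
      have hQ' : P x * sInf S = P y * sInf S := by
        have := hQ
        rw [Qfun, Qfun, hSy] at this
        exact this
      have hPxy : P x = P y := mul_right_cancel₀ (ne_of_gt hmpos) hQ'
      have hPy : P y = Real.sign (((Equiv.Perm.sign π : ℤ) : ℝ)) * P x := by
        rw [hy]; exact prod_sign_perm x π
      rw [hs] at hPy
      have hneg : Real.sign (((-1 : ℤˣ) : ℤ) : ℝ) = -1 := by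
        norm_num
        exact Real.sign_of_neg (by norm_num)
      rw [hneg] at hPy
      rw [hPy] at hPxy
      exact hPx (by linarith)
  · -- x not injective: fix parity by a transposition
    obtain ⟨a, b, hab, hne⟩ := Function.not_injective_iff.mp hinj
    have hxτ : x ∘ ⇑(Equiv.swap a b) = x := by
      funext k
      simp only [Function.comp_apply, Equiv.swap_apply_def]
      split_ifs with h1 h2
      · rw [h1, hab]
      · rw [h2, hab]
      · rfl
    rcases Int.units_eq_one_or (Equiv.Perm.sign π) with hs | hs
    · exact ⟨π, Equiv.Perm.mem_alternatingGroup.mpr hs, hy⟩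
    · refine ⟨Equiv.swap a b * π, ?_, ?_⟩
      · rw [Equiv.Perm.mem_alternatingGroup, Equiv.Perm.sign_mul,
          Equiv.Perm.sign_swap hne, hs]
        norm_num
      · rw [Equiv.Perm.coe_mul, ← Function.comp_assoc, hxτ]
        exact hy
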